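/- Let Δ_{3k-1} be the clique complex of the complement of P_{3k-1} and let F_1,...,F_{k+1} be its facets of cardinality k. The number of faces F of ⟨F_1,...,F_{k+1}⟩ with |F| = k-1 that are contained in no facet of Δ_{3k-1} of cardinality greater than k is exactly k; moreover every face of ⟨F_1,...,F_{k+1}⟩ of cardinality less than k-1 is contained in some facet of cardinality greater than k. -/

import Mathlib

open Finset

attribute [local instance] Classical.propDecidable

/-- `s` is a face of the clique complex `Δ_n = Δ(P_nᶜ)` of the complement of the path
`P_n` on `[n] = {1, …, n}`: a subset of `[n]` whose elements have pairwise differences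
at least 2. -/
def isFaceP (n : ℕ) (s : Finset ℕ) : Prop :=
  s ⊆ Finset.Icc 1 n ∧ ∀ i ∈ s, ∀ j ∈ s, i < j → i + 2 ≤ j

/-- `s` is a facet (maximal face) of `Δ_n = Δ(P_nᶜ)`. -/
def isFacetP (n : ℕ) (s : Finset ℕ) : Prop :=
  isFaceP n s ∧ ∀ t, isFaceP n t → s ⊆ t → t = s

lemma face_subset {n : ℕ} {s t : Finset ℕ} (ht : isFaceP n t) (h : s ⊆ t) : isFaceP n s :=
  ⟨h.trans ht.1, fun i hi j hj hij => ht.2 i (h hi) j (h hj) hij⟩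

lemma exists_facet {n : ℕ} {F : Finset ℕ} (hF : isFaceP n F) :
    ∃ G, isFacetP n G ∧ F ⊆ G := by
  classical
  set S := (Finset.Icc 1 n).powerset.filter (fun t => isFaceP n t ∧ F ⊆ t) with hS
  have hFS : F ∈ S := by
    simp only [hS, mem_filter, mem_powerset]
    exact ⟨hF.1, hF, Finset.Subset.refl F⟩
  obtain ⟨G, hGS, hGmax⟩ := S.exists_max_image (fun t => t.card) ⟨F, hFS⟩
  simp only [hS, mem_filter, mem_powerset] at hGS
  refine ⟨G, ⟨hGS.2.1, ?_⟩, hGS.2.2⟩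
  intro t ht hGt
  have htS : t ∈ S := by
    simp only [hS, mem_filter, mem_powerset]
    exact ⟨ht.1, ht, hGS.2.2.trans hGt⟩
  have := hGmax t htS
  exact (Finset.eq_of_subset_of_card_le hGt this).symm

lemma exists_big_face : ∀ n : ℕ, ∀ F : Finset ℕ, isFaceP n F →
    ∃ G, isFaceP n G ∧ F ⊆ G ∧ n ≤ 2 * G.card + F.card := by
  intro n
  induction n using Nat.strong_induction_on with
  | _ n IH =>
  intro F hF
  rcases Nat.eq_zero_or_pos n with rfl | hn
  · exact ⟨F, hF, Finset.Subset.refl F, by omega⟩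
  by_cases hnF : n ∈ F
  · -- erase n, recurse on n-2
    have hF' : isFaceP (n-2) (F.erase n) := by
      constructor
      · intro a ha
        have h1 := Finset.mem_of_mem_erase ha
        have h2 := Finset.ne_of_mem_erase ha
        have h3 := hF.1 h1
        simp only [mem_Icc] at h3 ⊢
        have h4 := hF.2 a h1 n hnF (by omega)
        omega
      · intro i hi j hj hij
        exact hF.2 i (Finset.mem_of_mem_erase hi) j (Finset.mem_of_mem_erase hj) hij
    obtain ⟨G', hG', hsub', hcard'⟩ := IH (n-2) (by omega) _ hF'
    have hG'le : ∀ x ∈ G', 1 ≤ x ∧ x ≤ n - 2 := by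
      intro x hx; have := hG'.1 hx; simp only [mem_Icc] at this; omega
    refine ⟨insert n G', ⟨?_, ?_⟩, ?_, ?_⟩
    · intro a ha
      rcases Finset.mem_insert.mp ha with rfl | ha
      · simp only [mem_Icc]; omega
      · have := hG'.1 ha; simp only [mem_Icc] at this ⊢; omega
    · intro i hi j hj hij
      rcases Finset.mem_insert.mp hi with h1 | h1
      · rcases Finset.mem_insert.mp hj with h2 | h2
        · omega
        · have := hG'le j h2; omega
      · rcases Finset.mem_insert.mp hj with h2 | h2
        · have := hG'le i h1; omega
        · exact hG'.2 i h1 j h2 hij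
    · intro a ha
      rcases eq_or_ne a n with rfl | hne
      · exact Finset.mem_insert_self _ _
      · exact Finset.mem_insert_of_mem (hsub' (Finset.mem_erase.mpr ⟨hne, ha⟩))
    · have hnG' : n ∉ G' := fun h => by have := hG'le n h; omega
      rw [Finset.card_insert_of_notMem hnG']
      have : (F.erase n).card = F.card - 1 := Finset.card_erase_of_mem hnF
      have hFpos : 1 ≤ F.card := Finset.card_pos.mpr ⟨n, hnF⟩
      omega
  · by_cases hn1F : n - 1 ∈ F
    · have hn2 : 2 ≤ n := by
        have := hF.1 hn1F; simp only [mem_Icc] at this; omega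
      have hF' : isFaceP (n-3) (F.erase (n-1)) := by
        constructor
        · intro a ha
          have h1 := Finset.mem_of_mem_erase ha
          have h2 := Finset.ne_of_mem_erase ha
          have h3 := hF.1 h1
          simp only [mem_Icc] at h3 ⊢
          have h5 : a ≠ n := fun h => hnF (h ▸ h1)
          have h4 := hF.2 a h1 (n-1) hn1F (by omega)
          omega
        · intro i hi j hj hij
          exact hF.2 i (Finset.mem_of_mem_erase hi) j (Finset.mem_of_mem_erase hj) hij
      obtain ⟨G', hG', hsub', hcard'⟩ := IH (n-3) (by omega) _ hF'
      have hG'le : ∀ x ∈ G', 1 ≤ x ∧ x ≤ n - 3 := by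
        intro x hx; have := hG'.1 hx; simp only [mem_Icc] at this; omega
      refine ⟨insert (n-1) G', ⟨?_, ?_⟩, ?_, ?_⟩
      · intro a ha
        rcases Finset.mem_insert.mp ha with rfl | ha
        · simp only [mem_Icc]; omega
        · have := hG'.1 ha; simp only [mem_Icc] at this ⊢; omega
      · intro i hi j hj hij
        rcases Finset.mem_insert.mp hi with h1 | h1
        · rcases Finset.mem_insert.mp hj with h2 | h2
          · omega
          · have := hG'le j h2; omega
        · rcases Finset.mem_insert.mp hj with h2 | h2
          · have := hG'le i h1; omega
          · exact hG'.2 i h1 j h2 hij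
      · intro a ha
        rcases eq_or_ne a (n-1) with rfl | hne
        · exact Finset.mem_insert_self _ _
        · exact Finset.mem_insert_of_mem (hsub' (Finset.mem_erase.mpr ⟨hne, ha⟩))
      · have hnG' : n - 1 ∉ G' := fun h => by have := hG'le (n-1) h; omega
        rw [Finset.card_insert_of_notMem hnG']
        have : (F.erase (n-1)).card = F.card - 1 := Finset.card_erase_of_mem hn1F
        have hFpos : 1 ≤ F.card := Finset.card_pos.mpr ⟨n-1, hn1F⟩
        omega
    · have hF' : isFaceP (n-2) F := by
        constructor
        · intro a ha
          have h3 := hF.1 ha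
          simp only [mem_Icc] at h3 ⊢
          have h5 : a ≠ n := fun h => hnF (h ▸ ha)
          have h6 : a ≠ n - 1 := fun h => hn1F (h ▸ ha)
          omega
        · exact hF.2
      obtain ⟨G', hG', hsub', hcard'⟩ := IH (n-2) (by omega) _ hF'
      have hG'le : ∀ x ∈ G', 1 ≤ x ∧ x ≤ n - 2 := by
        intro x hx; have := hG'.1 hx; simp only [mem_Icc] at this; omega
      refine ⟨insert n G', ⟨?_, ?_⟩, ?_, ?_⟩
      · intro a ha
        rcases Finset.mem_insert.mp ha with rfl | ha
        · simp only [mem_Icc]; omega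
        · have := hG'.1 ha; simp only [mem_Icc] at this ⊢; omega
      · intro i hi j hj hij
        rcases Finset.mem_insert.mp hi with h1 | h1
        · rcases Finset.mem_insert.mp hj with h2 | h2
          · omega
          · have := hG'le j h2; omega
        · rcases Finset.mem_insert.mp hj with h2 | h2
          · have := hG'le i h1; omega
          · exact hG'.2 i h1 j h2 hij
      · exact hsub'.trans (Finset.subset_insert _ _)
      · have hnG' : n ∉ G' := fun h => by have := hG'le n h; omega
        rw [Finset.card_insert_of_notMem hnG']
        omega

lemma face_insert_two {n : ℕ} {F : Finset ℕ} (hF : isFaceP n F) {u v : ℕ}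
    (hu1 : 1 ≤ u) (huv : u + 2 ≤ v) (hv : v ≤ n)
    (hfar : ∀ x ∈ F, x + 2 ≤ u ∨ (u + 2 ≤ x ∧ x + 2 ≤ v) ∨ v + 2 ≤ x) :
    isFaceP n (insert u (insert v F)) ∧ (insert u (insert v F)).card = F.card + 2 := by
  have huF : u ∉ F := fun h => by have := hfar u h; omega
  have hvF : v ∉ F := fun h => by have := hfar v h; omega
  constructor
  · constructor
    · intro a ha
      simp only [Finset.mem_insert] at ha
      rcases ha with rfl | rfl | ha
      · simp only [mem_Icc]; omega
      · simp only [mem_Icc]; omega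
      · exact hF.1 ha
    · intro i hi j hj hij
      simp only [Finset.mem_insert] at hi hj
      rcases hi with h1 | h1 | h1 <;> rcases hj with h2 | h2 | h2
      · omega
      · omega
      · have := hfar j h2; omega
      · omega
      · omega
      · have := hfar j h2; omega
      · have := hfar i h1; omega
      · have := hfar i h1; omega
      · exact hF.2 i h1 j h2 hij
  · have h1 : u ∉ insert v F := by
      simp only [Finset.mem_insert]; push_neg; exact ⟨by omega, huF⟩
    rw [Finset.card_insert_of_notMem h1, Finset.card_insert_of_notMem hvF]

lemma not_star_of_two {n k : ℕ} {F : Finset ℕ} (hF : isFaceP n F) {u v : ℕ}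
    (hu1 : 1 ≤ u) (huv : u + 2 ≤ v) (hv : v ≤ n)
    (hfar : ∀ x ∈ F, x + 2 ≤ u ∨ (u + 2 ≤ x ∧ x + 2 ≤ v) ∨ v + 2 ≤ x)
    (hstar : ∀ G, isFaceP n G → F ⊆ G → G.card ≤ k) : F.card + 2 ≤ k := by
  obtain ⟨hface, hcard⟩ := face_insert_two hF hu1 huv hv hfar
  have := hstar _ hface (by
    intro x hx; exact Finset.mem_insert_of_mem (Finset.mem_insert_of_mem hx))
  omega

def FtF (k t : ℕ) : Finset ℕ :=
  (Finset.Icc 1 (k-1)).image (fun i => if i ≤ t then 3*i - 1 else 3*i + 1)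

lemma mem_FtF {k t x : ℕ} :
    x ∈ FtF k t ↔ ∃ i, 1 ≤ i ∧ i ≤ k - 1 ∧
      ((i ≤ t ∧ x = 3*i - 1) ∨ (t < i ∧ x = 3*i + 1)) := by
  simp only [FtF, Finset.mem_image, mem_Icc]
  constructor
  · rintro ⟨i, ⟨h1, h2⟩, h3⟩
    refine ⟨i, h1, h2, ?_⟩
    split_ifs at h3 with h
    · exact Or.inl ⟨h, h3.symm⟩
    · exact Or.inr ⟨by omega, h3.symm⟩
  · rintro ⟨i, h1, h2, (⟨h3, rfl⟩ | ⟨h3, rfl⟩)⟩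
    · exact ⟨i, ⟨h1, h2⟩, by rw [if_pos h3]⟩
    · exact ⟨i, ⟨h1, h2⟩, by rw [if_neg (by omega)]⟩

lemma FtF_face {k t : ℕ} (hk : 1 ≤ k) : isFaceP (3*k-1) (FtF k t) := by
  constructor
  · intro x hx
    rw [mem_FtF] at hx
    obtain ⟨i, h1, h2, h3⟩ := hx
    simp only [mem_Icc]
    rcases h3 with ⟨h3, rfl⟩ | ⟨h3, rfl⟩ <;> omega
  · intro x hx y hy hxy
    rw [mem_FtF] at hx hy
    obtain ⟨i, hi1, hi2, hi3⟩ := hx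
    obtain ⟨j, hj1, hj2, hj3⟩ := hy
    rcases hi3 with ⟨h3, rfl⟩ | ⟨h3, rfl⟩ <;> rcases hj3 with ⟨h4, rfl⟩ | ⟨h4, rfl⟩ <;> omega

lemma FtF_card {k t : ℕ} : (FtF k t).card = k - 1 := by
  rw [FtF, Finset.card_image_of_injOn, Nat.card_Icc]
  · omega
  · intro i hi j hj hij
    simp only [Finset.coe_Icc, Set.mem_Icc] at hi hj
    beta_reduce at hij; split_ifs at hij <;> omega

lemma card_le_of_supset_FtF {k t : ℕ} (hk : 1 ≤ k) (ht : t ≤ k - 1) {G : Finset ℕ}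
    (hG : isFaceP (3*k-1) G) (hsub : FtF k t ⊆ G) : G.card ≤ k := by
  classical
  have hGmem : ∀ x ∈ G, 1 ≤ x ∧ x ≤ 3*k-1 := by
    intro x hx; have := hG.1 hx; simp only [mem_Icc] at this; exact this
  have h := Finset.card_le_card_of_injOn
    (f := fun x => if x ≤ 3*t then (x+2)/3 else if x ≤ 3*t+2 then 0 else x/3)
    (s := G) (t := Finset.range k) ?_ ?_
  · simpa using h
  · intro x hx
    have hb := hGmem x hx
    simp only [Finset.coe_range, Set.mem_Iio, Finset.mem_coe, Finset.mem_range]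
    split_ifs <;> omega
  · intro x hx y hy hxy
    simp only [Finset.mem_coe] at hx hy
    by_contra hne
    -- wlog x < y
    rcases lt_trichotomy x y with hlt | heq | hlt
    rotate_left
    · exact hne heq
    rotate_right
    all_goals {
      first
      | (have hsp : x + 2 ≤ y := hG.2 x hx y hy hlt
         have hbx := hGmem x hx
         have hby := hGmem y hy
         simp only [] at hxy
         split_ifs at hxy with hc1 hc2 hc3 hc4 hc5
         -- case both ≤ 3t : y = x+2, x = 3i-2, y = 3i with i ≤ t
         · have hiF : 3*((y+2)/3) - 1 ∈ FtF k t := by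
             rw [mem_FtF]
             exact ⟨(y+2)/3, by omega, by omega, Or.inl ⟨by omega, rfl⟩⟩
           have := hG.2 x hx _ (hsub hiF) (by omega)
           omega
         · omega
         · omega
         · omega
         · omega
         · omega
         · omega
         · omega
         · -- both > 3t+2 : x = 3i, y = 3i+2
           have hiF : 3*(x/3) + 1 ∈ FtF k t := by
             rw [mem_FtF]
             exact ⟨x/3, by omega, by omega, Or.inr ⟨by omega, rfl⟩⟩
           have := hG.2 x hx _ (hsub hiF) (by omega)
           omega)
      | (have hsp : y + 2 ≤ x := hG.2 y hy x hx hlt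
         have hbx := hGmem x hx
         have hby := hGmem y hy
         simp only [] at hxy
         split_ifs at hxy with hc1 hc2 hc3 hc4 hc5
         · have hiF : 3*((x+2)/3) - 1 ∈ FtF k t := by
             rw [mem_FtF]
             exact ⟨(x+2)/3, by omega, by omega, Or.inl ⟨by omega, rfl⟩⟩
           have := hG.2 y hy _ (hsub hiF) (by omega)
           omega
         · omega
         · omega
         · omega
         · omega
         · omega
         · omega
         · omega
         · have hiF : 3*(y/3) + 1 ∈ FtF k t := by
             rw [mem_FtF]
             exact ⟨y/3, by omega, by omega, Or.inr ⟨by omega, rfl⟩⟩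
           have := hG.2 y hy _ (hsub hiF) (by omega)
           omega)
    }

lemma FtF_succ_high {k : ℕ} (hk : 1 ≤ k) :
    insert (3*k-1) (FtF k (k-1)) = FtF (k+1) k := by
  ext x
  simp only [Finset.mem_insert, mem_FtF]
  constructor
  · rintro (rfl | ⟨i, h1, h2, (⟨h3, rfl⟩ | ⟨h3, rfl⟩)⟩)
    · exact ⟨k, by omega, by omega, Or.inl ⟨by omega, rfl⟩⟩
    · exact ⟨i, by omega, by omega, Or.inl ⟨by omega, rfl⟩⟩
    · omega
  · rintro ⟨i, h1, h2, (⟨h3, rfl⟩ | ⟨h3, rfl⟩)⟩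
    · by_cases hik : i = k
      · subst hik; exact Or.inl rfl
      · exact Or.inr ⟨i, by omega, by omega, Or.inl ⟨by omega, rfl⟩⟩
    · omega

lemma FtF_succ_low {k t : ℕ} (hk : 1 ≤ k) (ht : t ≤ k - 1) :
    insert (3*k+1) (FtF k t) = FtF (k+1) t := by
  ext x
  simp only [Finset.mem_insert, mem_FtF]
  constructor
  · rintro (rfl | ⟨i, h1, h2, (⟨h3, rfl⟩ | ⟨h3, rfl⟩)⟩)
    · exact ⟨k, by omega, by omega, Or.inr ⟨by omega, rfl⟩⟩
    · exact ⟨i, by omega, by omega, Or.inl ⟨by omega, rfl⟩⟩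
    · exact ⟨i, by omega, by omega, Or.inr ⟨by omega, rfl⟩⟩
  · rintro ⟨i, h1, h2, (⟨h3, rfl⟩ | ⟨h3, rfl⟩)⟩
    · exact Or.inr ⟨i, by omega, by omega, Or.inl ⟨by omega, rfl⟩⟩
    · by_cases hik : i = k
      · subst hik; exact Or.inl rfl
      · exact Or.inr ⟨i, by omega, by omega, Or.inr ⟨by omega, rfl⟩⟩

lemma face_mono {n m : ℕ} {s : Finset ℕ} (h : n ≤ m) (hs : isFaceP n s) : isFaceP m s := by
  refine ⟨fun x hx => ?_, hs.2⟩
  have := hs.1 hx; simp only [mem_Icc] at this ⊢; omega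

lemma face_insert_one {n : ℕ} {F : Finset ℕ} (hF : isFaceP n F) {u : ℕ}
    (hu1 : 1 ≤ u) (hun : u ≤ n) (hfar : ∀ x ∈ F, x + 2 ≤ u ∨ u + 2 ≤ x) :
    isFaceP n (insert u F) ∧ (insert u F).card = F.card + 1 := by
  have huF : u ∉ F := fun h => by have := hfar u h; omega
  refine ⟨⟨?_, ?_⟩, Finset.card_insert_of_notMem huF⟩
  · intro x hx
    rcases Finset.mem_insert.mp hx with rfl | hx
    · simp only [mem_Icc]; omega
    · exact hF.1 hx
  · intro i hi j hj hij
    rcases Finset.mem_insert.mp hi with h1 | h1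
    · rcases Finset.mem_insert.mp hj with h2 | h2
      · omega
      · have := hfar j h2; omega
    · rcases Finset.mem_insert.mp hj with h2 | h2
      · have := hfar i h1; omega
      · exact hF.2 i h1 j h2 hij

lemma main_struct : ∀ k : ℕ, 1 ≤ k → ∀ F : Finset ℕ, isFaceP (3*k-1) F → F.card = k - 1 →
    (∀ G, isFaceP (3*k-1) G → F ⊆ G → G.card ≤ k) → ∃ t, t ≤ k - 1 ∧ F = FtF k t := by
  intro k hk
  induction k, hk using Nat.le_induction with
  | base =>
    intro F hF hcard hstar
    refine ⟨0, le_refl 0, ?_⟩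
    have h0 : F.card = 0 := by omega
    rw [Finset.card_eq_zero] at h0
    have he : Finset.Icc 1 0 = (∅ : Finset ℕ) := by simp
    rw [h0, FtF, he, Finset.image_empty]
  | succ k hk IH =>
    intro F hF hcard hstar
    have hn : 3*(k+1)-1 = 3*k+2 := by omega
    rw [hn] at hF hstar
    have hcardk : F.card = k := by omega
    have hne : F.Nonempty := Finset.card_pos.mp (by omega)
    set a := F.max' hne with haa
    have ha : a ∈ F := F.max'_mem hne
    have hmax : ∀ x ∈ F, x ≤ a := fun x hx => F.le_max' x hx
    have hbound : 1 ≤ a ∧ a ≤ 3*k+2 := by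
      have := hF.1 ha; simpa [mem_Icc] using this
    have hstep : ∀ x ∈ F.erase a, 1 ≤ x ∧ x + 2 ≤ a := by
      intro x hx
      have h1 := Finset.mem_of_mem_erase hx
      have h2 := Finset.ne_of_mem_erase hx
      have h3 := hF.1 h1
      simp only [mem_Icc] at h3
      exact ⟨h3.1, hF.2 x h1 a ha (lt_of_le_of_ne (hmax x h1) h2)⟩
    have hFins : F = insert a (F.erase a) := (Finset.insert_erase ha).symm
    have hcarde : (F.erase a).card = k - 1 := by
      rw [Finset.card_erase_of_mem ha]; omega
    have hsparse : ∀ i ∈ F.erase a, ∀ j ∈ F.erase a, i < j → i + 2 ≤ j := by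
      intro i hi j hj hij
      exact hF.2 i (Finset.mem_of_mem_erase hi) j (Finset.mem_of_mem_erase hj) hij
    rcases le_or_gt a (3*k-2) with hc1 | hc1
    · exfalso
      have := not_star_of_two hF (u := a+2) (v := a+4) (by omega) (by omega) (by omega)
        (fun x hx => Or.inl (by have := hmax x hx; omega)) hstar
      omega
    have hacase : a = 3*k-1 ∨ a = 3*k ∨ a = 3*k+1 ∨ a = 3*k+2 := by omega
    rcases hacase with hA | hA | hA | hA
    · -- a = 3k-1  (tight right end)
      have hsmall : ∀ x ∈ F.erase a, 1 ≤ x ∧ x ≤ 3*k-3 := by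
        intro x hx; have := hstep x hx; omega
      have hface' : isFaceP (3*k-1) (F.erase a) := by
        refine ⟨fun x hx => ?_, hsparse⟩
        have := hsmall x hx; simp only [mem_Icc]; omega
      have hstar' : ∀ G, isFaceP (3*k-1) G → F.erase a ⊆ G → G.card ≤ k := by
        intro G hG hsubG
        classical
        set G0 := (G.erase (3*k-1)).erase (3*k-2) with hG0
        have hG0mem : ∀ x ∈ G0, x ∈ G ∧ x ≤ 3*k-3 := by
          intro x hx
          have h1 := Finset.mem_of_mem_erase hx
          have h2 := Finset.ne_of_mem_erase hx
          have h3 := Finset.ne_of_mem_erase h1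
          have h4 := Finset.mem_of_mem_erase h1
          have h5 := hG.1 h4
          simp only [mem_Icc] at h5
          exact ⟨h4, by omega⟩
        have hG0face : isFaceP (3*k+2) G0 :=
          face_mono (by omega) (face_subset hG ((Finset.erase_subset _ _).trans (Finset.erase_subset _ _)))
        obtain ⟨hHface, hHcard⟩ := face_insert_two hG0face (u := 3*k-1) (v := 3*k+1)
          (by omega) (by omega) (by omega)
          (fun x hx => Or.inl (by have := hG0mem x hx; omega))
        have hHsub : F ⊆ insert (3*k-1) (insert (3*k+1) G0) := by
          rw [hFins]
          intro x hx
          rcases Finset.mem_insert.mp hx with rfl | hx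
          · rw [hA]; exact Finset.mem_insert_self _ _
          · refine Finset.mem_insert_of_mem (Finset.mem_insert_of_mem ?_)
            rw [hG0]
            refine Finset.mem_erase.mpr ⟨by have := hsmall x hx; omega,
              Finset.mem_erase.mpr ⟨by have := hsmall x hx; omega, hsubG hx⟩⟩
        have hle := hstar _ hHface hHsub
        have hGle : G.card ≤ G0.card + 1 := by
          by_cases p : 3*k-1 ∈ G
          · have q : 3*k-2 ∉ G := by
              intro q
              have := hG.2 (3*k-2) q (3*k-1) p (by omega)
              omega
            have he1 : G0 = G.erase (3*k-1) := by
              rw [hG0]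
              apply Finset.erase_eq_of_notMem
              intro hmem2
              exact q (Finset.mem_of_mem_erase hmem2)
            rw [he1, Finset.card_erase_of_mem p]
            omega
          · have he1 : G.erase (3*k-1) = G := Finset.erase_eq_of_notMem p
            rw [hG0, he1]
            by_cases q : 3*k-2 ∈ G
            · rw [Finset.card_erase_of_mem q]; omega
            · rw [Finset.erase_eq_of_notMem q]; omega
        omega
      obtain ⟨t, ht, hFt⟩ := IH (F.erase a) hface' hcarde hstar'
      have htk : t = k - 1 := by
        by_contra hne2
        have hmem : 3*(k-1)+1 ∈ FtF k t :=
          mem_FtF.mpr ⟨k-1, by omega, le_refl _, Or.inr ⟨by omega, rfl⟩⟩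
        rw [← hFt] at hmem
        have := hstep _ hmem
        omega
      refine ⟨k, by omega, ?_⟩
      rw [hFins, hFt, htk, hA, FtF_succ_high hk]
    · -- a = 3k : contradiction
      exfalso
      have hsmall : ∀ x ∈ F.erase a, 1 ≤ x ∧ x ≤ 3*k-2 := by
        intro x hx; have := hstep x hx; omega
      have hface' : isFaceP (3*k-1) (F.erase a) := by
        refine ⟨fun x hx => ?_, hsparse⟩
        have := hsmall x hx; simp only [mem_Icc]; omega
      have hstar' : ∀ G, isFaceP (3*k-1) G → F.erase a ⊆ G → G.card ≤ k := by
        intro G hG hsubG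
        classical
        set G0 := G.erase (3*k-1) with hG0
        have hG0mem : ∀ x ∈ G0, x ∈ G ∧ x ≤ 3*k-2 := by
          intro x hx
          have h1 := Finset.mem_of_mem_erase hx
          have h2 := Finset.ne_of_mem_erase hx
          have := hG.1 h1; simp only [mem_Icc] at this
          exact ⟨h1, by omega⟩
        have hG0face : isFaceP (3*k+2) G0 :=
          face_mono (by omega) (face_subset hG (Finset.erase_subset _ _))
        obtain ⟨hHface, hHcard⟩ := face_insert_two hG0face (u := 3*k) (v := 3*k+2)
          (by omega) (by omega) (by omega)
          (fun x hx => Or.inl (by have := hG0mem x hx; omega))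
        have hHsub : F ⊆ insert (3*k) (insert (3*k+2) G0) := by
          rw [hFins]
          intro x hx
          rcases Finset.mem_insert.mp hx with rfl | hx
          · rw [hA]; exact Finset.mem_insert_self _ _
          · refine Finset.mem_insert_of_mem (Finset.mem_insert_of_mem ?_)
            rw [hG0, Finset.mem_erase]
            exact ⟨by have := hsmall x hx; omega, hsubG hx⟩
        have hle := hstar _ hHface hHsub
        have hGle : G.card ≤ G0.card + 1 := by
          by_cases h : (3*k-1) ∈ G
          · rw [hG0, Finset.card_erase_of_mem h]; omega
          · rw [hG0, Finset.erase_eq_of_notMem h]; omega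
        omega
      obtain ⟨t, ht, hFt⟩ := IH (F.erase a) hface' hcarde hstar'
      have hmemF : ∀ x ∈ F, x = 3*k ∨ ∃ i, 1 ≤ i ∧ i ≤ k-1 ∧
          ((i ≤ t ∧ x = 3*i-1) ∨ (t < i ∧ x = 3*i+1)) := by
        intro x hx
        rcases eq_or_ne x a with rfl | hne2
        · exact Or.inl hA
        · have hx' : x ∈ F.erase a := Finset.mem_erase.mpr ⟨hne2, hx⟩
          rw [hFt, mem_FtF] at hx'
          exact Or.inr hx'
      have := not_star_of_two hF
        (u := if t = k-1 then 3*k-2 else if t = 0 then 2 else 3*t+1) (v := 3*k+2)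
        (by split_ifs <;> omega) (by split_ifs <;> omega) (by omega)
        (by
          intro x hx
          rcases hmemF x hx with h | ⟨i, h1, h2, (⟨h3, h4⟩ | ⟨h3, h4⟩)⟩ <;>
            split_ifs <;> omega)
        hstar
      omega
    · -- a = 3k+1
      have hsmall : ∀ x ∈ F.erase a, 1 ≤ x ∧ x ≤ 3*k-1 := by
        intro x hx; have := hstep x hx; omega
      have hface' : isFaceP (3*k-1) (F.erase a) := by
        refine ⟨fun x hx => ?_, hsparse⟩
        have := hsmall x hx; simp only [mem_Icc]; omega
      have hstar' : ∀ G, isFaceP (3*k-1) G → F.erase a ⊆ G → G.card ≤ k := by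
        intro G hG hsubG
        have hGmem : ∀ x ∈ G, x ≤ 3*k-1 := by
          intro x hx; have := hG.1 hx; simp only [mem_Icc] at this; omega
        obtain ⟨hHface, hHcard⟩ := face_insert_one
          (face_mono (show 3*k-1 ≤ 3*k+2 by omega) hG) (u := 3*k+1)
          (by omega) (by omega)
          (fun x hx => Or.inl (by have := hGmem x hx; omega))
        have hHsub : F ⊆ insert (3*k+1) G := by
          rw [hFins]
          intro x hx
          rcases Finset.mem_insert.mp hx with rfl | hx
          · rw [hA]; exact Finset.mem_insert_self _ _
          · exact Finset.mem_insert_of_mem (hsubG hx)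
        have hle := hstar _ hHface hHsub
        omega
      obtain ⟨t, ht, hFt⟩ := IH (F.erase a) hface' hcarde hstar'
      refine ⟨t, by omega, ?_⟩
      rw [hFins, hFt, hA, FtF_succ_low hk ht]
    · -- a = 3k+2
      by_cases hb : 3*k ∈ F
      · -- both 3k and 3k+2 in F : contradiction via big face below 3k-2
        exfalso
        have hk2 : 2 ≤ k := by
          have h2 : 1 < F.card := Finset.one_lt_card.mpr ⟨3*k, hb, a, ha, by omega⟩
          omega
        set F2 := (F.erase a).erase (3*k) with hF2
        have hF2mem : ∀ x ∈ F2, x ∈ F ∧ x ≠ 3*k ∧ x ≠ a := by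
          intro x hx
          have h1 := Finset.mem_of_mem_erase hx
          exact ⟨Finset.mem_of_mem_erase h1, Finset.ne_of_mem_erase hx,
            Finset.ne_of_mem_erase h1⟩
        have hF2face : isFaceP (3*k-2) F2 := by
          constructor
          · intro x hx
            obtain ⟨h1, h2, h3⟩ := hF2mem x hx
            have h4 := hF.1 h1; simp only [mem_Icc] at h4
            have h5 : x < 3*k := by
              have := hstep x (Finset.mem_erase.mpr ⟨h3, h1⟩); omega
            have h6 := hF.2 x h1 (3*k) hb h5
            simp only [mem_Icc]; omega
          · intro i hi j hj hij
            exact hF.2 i (hF2mem i hi).1 j (hF2mem j hj).1 hij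
        have hF2card : F2.card = k - 2 := by
          rw [hF2, Finset.card_erase_of_mem, hcarde]
          · omega
          · exact Finset.mem_erase.mpr ⟨by omega, hb⟩
        obtain ⟨G1, hG1face, hG1sub, hG1card⟩ := exists_big_face (3*k-2) F2 hF2face
        have hG1mem : ∀ x ∈ G1, x ≤ 3*k-2 := by
          intro x hx; have := hG1face.1 hx; simp only [mem_Icc] at this; omega
        obtain ⟨hHface, hHcard⟩ := face_insert_two
          (face_mono (show 3*k-2 ≤ 3*k+2 by omega) hG1face) (u := 3*k) (v := 3*k+2)
          (by omega) (by omega) (by omega)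
          (fun x hx => Or.inl (by have := hG1mem x hx; omega))
        have hHsub : F ⊆ insert (3*k) (insert (3*k+2) G1) := by
          intro x hx
          rcases eq_or_ne x a with rfl | hne2
          · rw [hA]; exact Finset.mem_insert_of_mem (Finset.mem_insert_self _ _)
          · rcases eq_or_ne x (3*k) with rfl | hne3
            · exact Finset.mem_insert_self _ _
            · refine Finset.mem_insert_of_mem (Finset.mem_insert_of_mem (hG1sub ?_))
              rw [hF2]
              exact Finset.mem_erase.mpr ⟨hne3, Finset.mem_erase.mpr ⟨hne2, hx⟩⟩
        have hle := hstar _ hHface hHsub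
        omega
      · -- 3k ∉ F
        exfalso
        have hsmall : ∀ x ∈ F.erase a, 1 ≤ x ∧ x ≤ 3*k-1 := by
          intro x hx
          have h0 := hstep x hx
          have h1 : x ≠ 3*k := by
            intro h; exact hb (h ▸ Finset.mem_of_mem_erase hx)
          omega
        have hface' : isFaceP (3*k-1) (F.erase a) := by
          refine ⟨fun x hx => ?_, hsparse⟩
          have := hsmall x hx; simp only [mem_Icc]; omega
        have hstar' : ∀ G, isFaceP (3*k-1) G → F.erase a ⊆ G → G.card ≤ k := by
          intro G hG hsubG
          have hGmem : ∀ x ∈ G, x ≤ 3*k-1 := by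
            intro x hx; have := hG.1 hx; simp only [mem_Icc] at this; omega
          obtain ⟨hHface, hHcard⟩ := face_insert_one
            (face_mono (show 3*k-1 ≤ 3*k+2 by omega) hG) (u := 3*k+2)
            (by omega) (by omega)
            (fun x hx => Or.inl (by have := hGmem x hx; omega))
          have hHsub : F ⊆ insert (3*k+2) G := by
            rw [hFins]
            intro x hx
            rcases Finset.mem_insert.mp hx with rfl | hx
            · rw [hA]; exact Finset.mem_insert_self _ _
            · exact Finset.mem_insert_of_mem (hsubG hx)
          have hle := hstar _ hHface hHsub
          omega
        obtain ⟨t, ht, hFt⟩ := IH (F.erase a) hface' hcarde hstar'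
        have hmemF : ∀ x ∈ F, x = 3*k+2 ∨ ∃ i, 1 ≤ i ∧ i ≤ k-1 ∧
            ((i ≤ t ∧ x = 3*i-1) ∨ (t < i ∧ x = 3*i+1)) := by
          intro x hx
          rcases eq_or_ne x a with rfl | hne2
          · exact Or.inl hA
          · have hx' : x ∈ F.erase a := Finset.mem_erase.mpr ⟨hne2, hx⟩
            rw [hFt, mem_FtF] at hx'
            exact Or.inr hx'
        have := not_star_of_two hF
          (u := if t = k-1 then 3*k-2 else if t = 0 then 2 else 3*t+1) (v := 3*k)
          (by split_ifs <;> omega) (by split_ifs <;> omega) (by omega)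
          (by
            intro x hx
            rcases hmemF x hx with h | ⟨i, h1, h2, (⟨h3, h4⟩ | ⟨h3, h4⟩)⟩ <;>
              split_ifs <;> omega)
          hstar
        omega

lemma FtF_ne {k t1 t2 : ℕ} (h12 : t1 < t2) (h2 : t2 ≤ k - 1) : FtF k t1 ≠ FtF k t2 := by
  intro heq
  have w : 3*(t1+1)-1 ∈ FtF k t2 :=
    mem_FtF.mpr ⟨t1+1, by omega, by omega, Or.inl ⟨by omega, rfl⟩⟩
  rw [← heq, mem_FtF] at w
  obtain ⟨i, hi1, hi2, (⟨h3, h4⟩ | ⟨h3, h4⟩)⟩ := w <;> omega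

/-- Let `F_1, …, F_{k+1}` be the facets of `Δ_{3k-1}` of cardinality `k`. Exactly `k`
faces `F` of the subcomplex `⟨F_1, …, F_{k+1}⟩` with `|F| = k - 1` are contained in no
facet of `Δ_{3k-1}` of cardinality greater than `k`; moreover every face of
`⟨F_1, …, F_{k+1}⟩` of cardinality less than `k - 1` is contained in some facet of
cardinality greater than `k`. -/
theorem faces_of_small_facets_path3k_sub_one (k : ℕ) (hk : 1 ≤ k) :
    ((Finset.Icc 1 (3 * k - 1)).powerset.filter fun F =>
        isFaceP (3 * k - 1) F ∧ F.card = k - 1 ∧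
          (∃ Fi, isFacetP (3 * k - 1) Fi ∧ Fi.card = k ∧ F ⊆ Fi) ∧
          ¬ ∃ F', isFacetP (3 * k - 1) F' ∧ k < F'.card ∧ F ⊆ F').card = k ∧
      ∀ F : Finset ℕ, isFaceP (3 * k - 1) F → F.card + 1 < k →
        (∃ Fi, isFacetP (3 * k - 1) Fi ∧ Fi.card = k ∧ F ⊆ Fi) →
          ∃ F', isFacetP (3 * k - 1) F' ∧ k < F'.card ∧ F ⊆ F' := by
  classical
  constructor
  · -- the counting statement
    have hset : ((Finset.Icc 1 (3 * k - 1)).powerset.filter fun F =>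
        isFaceP (3 * k - 1) F ∧ F.card = k - 1 ∧
          (∃ Fi, isFacetP (3 * k - 1) Fi ∧ Fi.card = k ∧ F ⊆ Fi) ∧
          ¬ ∃ F', isFacetP (3 * k - 1) F' ∧ k < F'.card ∧ F ⊆ F')
        = (Finset.range k).image (FtF k) := by
      ext F
      simp only [Finset.mem_filter, Finset.mem_powerset, Finset.mem_image,
        Finset.mem_range]
      constructor
      · rintro ⟨hpow, hface, hcard, hexk, hnobig⟩
        have hstar : ∀ G, isFaceP (3*k-1) G → F ⊆ G → G.card ≤ k := by
          intro G hG hsub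
          obtain ⟨G2, hG2facet, hsub2⟩ := exists_facet hG
          have hle : ¬ k < G2.card := fun h => hnobig ⟨G2, hG2facet, h, hsub.trans hsub2⟩
          have := Finset.card_le_card hsub2
          omega
        obtain ⟨t, ht, hFt⟩ := main_struct k hk F hface hcard hstar
        exact ⟨t, by omega, hFt.symm⟩
      · rintro ⟨t, htk, rfl⟩
        have ht : t ≤ k - 1 := by omega
        have hface : isFaceP (3*k-1) (FtF k t) := FtF_face hk
        refine ⟨hface.1, hface, FtF_card, ?_, ?_⟩
        · -- a facet of cardinality exactly k containing FtF k t
          obtain ⟨hHface, hHcard⟩ := face_insert_one hface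
            (u := if t = k-1 then 3*k-2 else if t = 0 then 2 else 3*t+1)
            (by split_ifs <;> omega) (by split_ifs <;> omega)
            (by
              intro x hx
              rw [mem_FtF] at hx
              obtain ⟨i, h1, h2, (⟨h3, h4⟩ | ⟨h3, h4⟩)⟩ := hx <;>
                split_ifs <;> omega)
          obtain ⟨G2, hG2facet, hsub2⟩ := exists_facet hHface
          have hsubF : FtF k t ⊆ G2 := (Finset.subset_insert _ _).trans hsub2
          have hub : G2.card ≤ k := card_le_of_supset_FtF hk ht hG2facet.1 hsubF
          have hlb : k ≤ G2.card := by
            have := Finset.card_le_card hsub2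
            have := FtF_card (k := k) (t := t)
            omega
          exact ⟨G2, hG2facet, by omega, hsubF⟩
        · rintro ⟨F', hF'facet, hF'big, hF'sub⟩
          have := card_le_of_supset_FtF hk ht hF'facet.1 hF'sub
          omega
    rw [hset, Finset.card_image_of_injOn, Finset.card_range]
    intro t1 h1 t2 h2 heq
    simp only [Finset.coe_range, Set.mem_Iio] at h1 h2
    by_contra hne
    rcases lt_or_gt_of_ne hne with h | h
    · exact FtF_ne h (by omega) heq
    · exact FtF_ne h (by omega) heq.symm
  · -- the extension statement
    intro F hFface hFcard _
    obtain ⟨G, hGface, hsubG, hbig⟩ := exists_big_face (3*k-1) F hFface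
    obtain ⟨G2, hG2facet, hsubG2⟩ := exists_facet hGface
    refine ⟨G2, hG2facet, ?_, hsubG.trans hsubG2⟩
    have := Finset.card_le_card hsubG2
    omega
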